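/- Let A, B ∈ M_n(ℂ) be such that for every z ∈ ℂ^n and every λ, γ ∈ σ(A) with λ ≠ γ one has ‖(A − λI)z‖ = ‖(B − λI)z‖ and ‖(A − γI)z‖ = ‖(B − γI)z‖. Then for all z ∈ ℂ^n, 2 Re( conj(λ) z*(A−B)z ) = 2 Re( conj(γ) z*(A−B)z ), and consequently (conj(λ−γ))(A − B) is skew-Hermitian. -/

import Mathlib

open Matrix Complex in
private lemma quad_expand (n : ℕ) (M : Matrix (Fin n) (Fin n) ℂ) (μ : ℂ) (z : Fin n → ℂ) :
    ∑ i, Complex.normSq (((M - μ • 1).mulVec z) i)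
      = ∑ i, Complex.normSq ((M.mulVec z) i) + Complex.normSq μ * ∑ i, Complex.normSq (z i)
        - 2 * (starRingEnd ℂ μ * (dotProduct (star z) (M.mulVec z))).re := by
  have hv : (M - μ • 1).mulVec z = fun i => (M.mulVec z) i - μ * z i := by
    funext i
    simp [Matrix.sub_mulVec, Matrix.smul_mulVec, Matrix.one_mulVec, Pi.smul_apply,
      smul_eq_mul]
  rw [hv]
  have h1 : ∀ i, Complex.normSq ((M.mulVec z) i - μ * z i)
      = Complex.normSq ((M.mulVec z) i) + Complex.normSq μ * Complex.normSq (z i)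
        - 2 * ((M.mulVec z) i * (starRingEnd ℂ (μ * z i))).re := by
    intro i
    rw [Complex.normSq_sub, Complex.normSq_mul]
  simp only [h1]
  rw [Finset.sum_sub_distrib, Finset.sum_add_distrib, ← Finset.mul_sum, ← Finset.mul_sum,
    ← Complex.re_sum]
  have hsum : ∑ i, (M.mulVec z) i * (starRingEnd ℂ (μ * z i))
      = starRingEnd ℂ μ * dotProduct (star z) (M.mulVec z) := by
    rw [dotProduct, Finset.mul_sum]
    refine Finset.sum_congr rfl fun i _ => ?_
    simp only [_root_.map_mul, Pi.star_apply, starRingEnd_apply]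
    ring
  rw [hsum]

open Matrix Complex in
private lemma conj_quad (n : ℕ) (M : Matrix (Fin n) (Fin n) ℂ) (z : Fin n → ℂ) :
    dotProduct (star z) (Mᴴ.mulVec z)
      = starRingEnd ℂ (dotProduct (star z) (M.mulVec z)) := by
  simp only [dotProduct, Matrix.mulVec, Matrix.conjTranspose_apply, _root_.map_sum,
    _root_.map_mul, Pi.star_apply, starRingEnd_apply, star_star, Finset.mul_sum,
    dotProduct]
  rw [Finset.sum_comm]
  refine Finset.sum_congr rfl fun i _ => Finset.sum_congr rfl fun j _ => ?_
  ring

open Matrix Complex in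
private lemma matrix_eq_zero_of_quad (n : ℕ) (N : Matrix (Fin n) (Fin n) ℂ)
    (h : ∀ z : Fin n → ℂ, dotProduct (star z) (N.mulVec z) = 0) : N = 0 := by
  have base : ∀ i j : Fin n, ∀ c d : ℂ,
      dotProduct (star (Pi.single i c : Fin n → ℂ))
        (N.mulVec (Pi.single j d : Fin n → ℂ)) = starRingEnd ℂ c * N i j * d := by
    intro i j c d
    rw [Matrix.mulVec_single]
    have hs : star (Pi.single i c : Fin n → ℂ)
        = (Pi.single i (starRingEnd ℂ c) : Fin n → ℂ) := by
      funext k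
      by_cases hk : k = i <;> simp [Pi.star_apply, Pi.single_apply, hk]
    rw [hs, single_dotProduct]
    simp only [Pi.smul_apply, Matrix.col_apply, op_smul_eq_mul]
    ring
  have diag : ∀ i, N i i = 0 := by
    intro i
    have h0 := h (Pi.single i 1 : Fin n → ℂ)
    rw [base i i 1 1] at h0
    simpa using h0
  ext i j
  show N i j = 0
  rcases eq_or_ne i j with rfl | hij
  · exact diag i
  · have expand : ∀ c : ℂ,
        dotProduct (star ((Pi.single i 1 : Fin n → ℂ) + (Pi.single j c : Fin n → ℂ)))
          (N.mulVec ((Pi.single i 1 : Fin n → ℂ) + (Pi.single j c : Fin n → ℂ)))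
          = c * N i j + starRingEnd ℂ c * N j i := by
      intro c
      rw [star_add, Matrix.mulVec_add]
      simp only [add_dotProduct, dotProduct_add]
      rw [base, base, base, base, diag i, diag j]
      simp only [_root_.map_one, one_mul, mul_one, mul_zero, zero_mul]
      ring
    have e1 : (1:ℂ) * N i j + starRingEnd ℂ 1 * N j i = 0 := by
      rw [← expand 1]; exact h _
    have e2 : Complex.I * N i j + starRingEnd ℂ Complex.I * N j i = 0 := by
      rw [← expand Complex.I]; exact h _
    rw [Complex.conj_I] at e2
    simp only [_root_.map_one, one_mul] at e1
    have exy : N i j = N j i := by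
      apply mul_left_cancel₀ Complex.I_ne_zero
      linear_combination e2
    have exy' : N i j - N j i = 0 := by rw [exy]; ring
    linear_combination (e1 + exy') / 2

open Matrix in
theorem skewHermitian_of_norm_conditions (n : ℕ) (A B : Matrix (Fin n) (Fin n) ℂ)
    (h : ∀ z : Fin n → ℂ, ∀ lam ∈ spectrum ℂ A, ∀ gam ∈ spectrum ℂ A, lam ≠ gam →
      Real.sqrt (∑ i, Complex.normSq (((A - lam • 1).mulVec z) i)) =
        Real.sqrt (∑ i, Complex.normSq (((B - lam • 1).mulVec z) i)) ∧
      Real.sqrt (∑ i, Complex.normSq (((A - gam • 1).mulVec z) i)) =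
        Real.sqrt (∑ i, Complex.normSq (((B - gam • 1).mulVec z) i))) :
    ∀ lam ∈ spectrum ℂ A, ∀ gam ∈ spectrum ℂ A, lam ≠ gam →
      (∀ z : Fin n → ℂ,
        2 * (starRingEnd ℂ lam * (dotProduct (star z) ((A - B).mulVec z))).re =
        2 * (starRingEnd ℂ gam * (dotProduct (star z) ((A - B).mulVec z))).re) ∧
      (starRingEnd ℂ (lam - gam) • (A - B))ᴴ = -(starRingEnd ℂ (lam - gam) • (A - B)) := by
  intro lam hlam gam hgam hne
  have sumnn : ∀ (M : Matrix (Fin n) (Fin n) ℂ) (μ : ℂ) (z : Fin n → ℂ),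
      (0:ℝ) ≤ ∑ i, Complex.normSq (((M - μ • 1).mulVec z) i) :=
    fun M μ z => Finset.sum_nonneg fun i _ => Complex.normSq_nonneg _
  have claim : ∀ z : Fin n → ℂ,
      2 * (starRingEnd ℂ lam * (dotProduct (star z) ((A - B).mulVec z))).re =
      2 * (starRingEnd ℂ gam * (dotProduct (star z) ((A - B).mulVec z))).re := by
    intro z
    obtain ⟨h1, h2⟩ := h z lam hlam gam hgam hne
    rw [Real.sqrt_inj (sumnn A lam z) (sumnn B lam z)] at h1
    rw [Real.sqrt_inj (sumnn A gam z) (sumnn B gam z)] at h2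
    rw [quad_expand, quad_expand] at h1 h2
    have hre : ∀ μ : ℂ, (starRingEnd ℂ μ * (dotProduct (star z) ((A - B).mulVec z))).re
        = (starRingEnd ℂ μ * (dotProduct (star z) (A.mulVec z))).re
          - (starRingEnd ℂ μ * (dotProduct (star z) (B.mulVec z))).re := by
      intro μ
      rw [Matrix.sub_mulVec, dotProduct_sub, mul_sub, Complex.sub_re]
    rw [hre, hre]
    linarith
  refine ⟨claim, ?_⟩
  set M : Matrix (Fin n) (Fin n) ℂ := starRingEnd ℂ (lam - gam) • (A - B) with hM
  have hq : ∀ z : Fin n → ℂ, dotProduct (star z) ((M + Mᴴ).mulVec z) = 0 := by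
    intro z
    have hre0 : (dotProduct (star z) (M.mulVec z)).re = 0 := by
      have hMq : dotProduct (star z) (M.mulVec z)
          = starRingEnd ℂ (lam - gam) * dotProduct (star z) ((A - B).mulVec z) := by
        rw [hM, Matrix.smul_mulVec, dotProduct_smul, smul_eq_mul]
      rw [hMq, map_sub, sub_mul, Complex.sub_re]
      have := claim z
      linarith
    rw [Matrix.add_mulVec, dotProduct_add, conj_quad, Complex.add_conj, hre0]
    norm_num
  have hz := matrix_eq_zero_of_quad n (M + Mᴴ) hq
  exact eq_neg_of_add_eq_zero_left (by rw [add_comm] at hz; exact hz)
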